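/- There is a unique group homomorphism π : Mp(2,ℤ) → SL(2,ℤ) with π(û) = U and π(ŝ) = S; this π is surjective, and its kernel is the two-element central subgroup {1, ŝ⁴} of Mp(2,ℤ). (Thus Mp(2,ℤ) is a central extension of SL(2,ℤ) by ℤ/2ℤ.) -/

import Mathlib

/-- The matrix `S = !![0,-1; 1,0]` as an element of `SL(2,ℤ)`. -/
def S : Matrix.SpecialLinearGroup (Fin 2) ℤ :=
  ⟨!![0, -1; 1, 0], by norm_num [Matrix.det_fin_two_of]⟩

/-- The matrix `U = !![0,-1; 1,1]` as an element of `SL(2,ℤ)`. -/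
def U : Matrix.SpecialLinearGroup (Fin 2) ℤ :=
  ⟨!![0, -1; 1, 1], by norm_num [Matrix.det_fin_two_of]⟩

/-- The relators `ŝ⁸` and `ŝ²·û⁻³` in the free group on two generators,
where `false` stands for `û` and `true` stands for `ŝ`. -/
def mpRels : Set (FreeGroup Bool) :=
  {(FreeGroup.of true) ^ 8, (FreeGroup.of true) ^ 2 * ((FreeGroup.of false) ^ 3)⁻¹}

/-- The metaplectic group `Mp(2,ℤ) = ⟨û, ŝ ∣ ŝ⁸ = 1, ŝ² = û³⟩`. -/
abbrev Mp : Type := PresentedGroup mpRels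

/-- The generator `û` of `Mp(2,ℤ)`. -/
def uhat : Mp := PresentedGroup.of false

/-- The generator `ŝ` of `Mp(2,ℤ)`. -/
def shat : Mp := PresentedGroup.of true

namespace MpAux

abbrev SL2Z := Matrix.SpecialLinearGroup (Fin 2) ℤ

/-! ### Matrix facts -/

lemma coe_S2 : ((S^2 : SL2Z) : Matrix (Fin 2) (Fin 2) ℤ) = -1 := by
  rw [pow_two, Matrix.SpecialLinearGroup.coe_mul]
  exact ModularGroup.S_mul_S_eq

lemma S4 : S^4 = 1 := by
  apply Subtype.ext
  rw [show (4:ℕ) = 2+2 by rfl, pow_add, Matrix.SpecialLinearGroup.coe_mul, coe_S2]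
  simp

lemma U3 : U^3 = S^2 := by
  apply Subtype.ext
  rw [pow_succ, pow_two, Matrix.SpecialLinearGroup.coe_mul, Matrix.SpecialLinearGroup.coe_mul,
    coe_S2, coe_U]
  ext i j
  fin_cases i <;> fin_cases j <;>
    simp [Matrix.mul_apply, Fin.sum_univ_two]
where
  coe_U : (U : Matrix (Fin 2) (Fin 2) ℤ) = !![0,-1;1,1] := rfl

lemma S2_sq : (S^2) * (S^2) = 1 := by
  rw [← pow_add]; exact S4

lemma S2_inv : (S^2 : SL2Z)⁻¹ = S^2 := inv_eq_of_mul_eq_one_right S2_sq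

lemma coe_SS : (S : Matrix (Fin 2) (Fin 2) ℤ) * S = -1 := ModularGroup.S_mul_S_eq

lemma S_inv_eq : (S : SL2Z)⁻¹ = S^2 * S := by
  apply inv_eq_of_mul_eq_one_right
  rw [← mul_assoc, ← pow_succ', ← pow_succ]
  exact S4

lemma coe_Sinv : ((S⁻¹ : SL2Z) : Matrix (Fin 2) (Fin 2) ℤ) = -(S : Matrix (Fin 2) (Fin 2) ℤ) := by
  rw [S_inv_eq, Matrix.SpecialLinearGroup.coe_mul, coe_S2, neg_one_mul]

lemma S_ne_one : S ≠ 1 := by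
  intro h
  have h2 : ((S:SL2Z) : Matrix (Fin 2) (Fin 2) ℤ) 1 0
      = ((1:SL2Z) : Matrix (Fin 2) (Fin 2) ℤ) 1 0 := by rw [h]
  rw [show ((S:SL2Z) : Matrix (Fin 2) (Fin 2) ℤ) 1 0 = 1 from rfl] at h2
  simp at h2

lemma S2_ne_one : (S^2 : SL2Z) ≠ 1 := by
  intro h
  have h2 : ((S^2:SL2Z) : Matrix (Fin 2) (Fin 2) ℤ) 0 0
      = ((1:SL2Z) : Matrix (Fin 2) (Fin 2) ℤ) 0 0 := by rw [h]
  rw [show ((S^2 : SL2Z) : Matrix (Fin 2) (Fin 2) ℤ) 0 0 = -1 by rw [coe_S2]; norm_num] at h2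
  simp at h2

lemma S2S_ne_one : (S^2 * S : SL2Z) ≠ 1 := by
  intro h
  have h2 : ((S^2*S:SL2Z) : Matrix (Fin 2) (Fin 2) ℤ) 1 0
      = ((1:SL2Z) : Matrix (Fin 2) (Fin 2) ℤ) 1 0 := by rw [h]
  rw [show ((S^2 * S : SL2Z) : Matrix (Fin 2) (Fin 2) ℤ) 1 0 = -1 by
    rw [Matrix.SpecialLinearGroup.coe_mul, coe_S2, neg_one_mul]; rfl] at h2
  simp at h2

lemma S_ne_S2 : S ≠ S^2 := by
  intro h
  have h2 : ((S:SL2Z) : Matrix (Fin 2) (Fin 2) ℤ) 0 0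
      = ((S^2:SL2Z) : Matrix (Fin 2) (Fin 2) ℤ) 0 0 := by rw [← h]
  rw [show ((S^2 : SL2Z) : Matrix (Fin 2) (Fin 2) ℤ) 0 0 = -1 by rw [coe_S2]; norm_num,
    show ((S:SL2Z) : Matrix (Fin 2) (Fin 2) ℤ) 0 0 = 0 from rfl] at h2
  simp at h2

/-- order two or less, integer powers -/
lemma ord2 {G : Type*} [Group G] (x : G) (h : x * x = 1) (k : ℤ) :
    x ^ k = 1 ∨ x ^ k = x := by
  have hx2 : x ^ (2:ℤ) = 1 := by rw [zpow_two, h]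
  rcases Int.even_or_odd k with ⟨q, rfl⟩ | ⟨q, rfl⟩
  · left
    rw [← two_mul, zpow_mul, hx2, one_zpow]
  · right
    rw [zpow_add, zpow_mul, hx2, one_zpow, one_mul, zpow_one]

lemma S2_zpow_odd (q : ℤ) : (S^2 : SL2Z) ^ (2*q+1) = S^2 := by
  have hx2 : (S^2 : SL2Z) ^ (2:ℤ) = 1 := by rw [zpow_two, S2_sq]
  rw [zpow_add, zpow_mul, hx2, one_zpow, one_mul, zpow_one]

/-! ### The homomorphism `π` -/

def fSL : Bool → SL2Z := fun b => if b then S else U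

lemma relmap : ∀ r ∈ mpRels, FreeGroup.lift fSL r = 1 := by
  intro r hr
  rcases hr with rfl | rfl
  · rw [map_pow, FreeGroup.lift_apply_of]
    show (S : SL2Z)^8 = 1
    rw [show (8:ℕ) = 4*2 by rfl, pow_mul, S4, one_pow]
  · rw [map_mul, map_pow, map_inv, map_pow, FreeGroup.lift_apply_of, FreeGroup.lift_apply_of]
    show (S:SL2Z)^2 * ((U:SL2Z)^3)⁻¹ = 1
    rw [U3, mul_inv_cancel]

def pi0 : Mp →* SL2Z := PresentedGroup.toGroup relmap

lemma pi0_u : pi0 uhat = U := PresentedGroup.toGroup.of relmap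
lemma pi0_s : pi0 shat = S := PresentedGroup.toGroup.of relmap

/-! ### Relations in `Mp` -/

lemma mk_rel (r : FreeGroup Bool) (h : r ∈ mpRels) : (QuotientGroup.mk r : Mp) = 1 :=
  (QuotientGroup.eq_one_iff r).2 (Subgroup.subset_normalClosure h)

lemma rel_s8 : shat ^ 8 = 1 := by
  have h := mk_rel _ (Set.mem_insert _ _)
  rw [show (QuotientGroup.mk (FreeGroup.of true ^ 8) : Mp)
      = (QuotientGroup.mk' _ (FreeGroup.of true))^8 by rw [← map_pow]; rfl] at h
  exact h

lemma rel_s2u3 : shat ^ 2 = uhat ^ 3 := by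
  have h := mk_rel _ (Set.mem_insert_of_mem _ rfl)
  rw [show (QuotientGroup.mk (FreeGroup.of true ^ 2 * (FreeGroup.of false ^ 3)⁻¹) : Mp)
      = (QuotientGroup.mk' _ (FreeGroup.of true))^2
        * ((QuotientGroup.mk' _ (FreeGroup.of false))^3)⁻¹ by
    rw [← map_pow, ← map_pow, ← map_inv, ← map_mul]; rfl] at h
  have : shat ^ 2 * (uhat ^3)⁻¹ = 1 := h
  rw [mul_inv_eq_one] at this
  exact this

lemma c_central : ∀ x : Mp, shat^2 * x = x * shat^2 := by
  have htop : (Subgroup.centralizer {shat^2} : Subgroup Mp) = ⊤ := by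
    rw [eq_top_iff, ← PresentedGroup.closure_range_of mpRels, Subgroup.closure_le]
    rintro _ ⟨b, rfl⟩
    rw [SetLike.mem_coe, Subgroup.mem_centralizer_iff]
    rintro y (rfl : y = shat^2)
    cases b
    · show shat^2 * uhat = uhat * shat^2
      rw [rel_s2u3]
      exact ((Commute.refl uhat).pow_left 3).eq
    · show shat^2 * shat = shat * shat^2
      exact ((Commute.refl shat).pow_left 2).eq
  intro x
  have hx : x ∈ Subgroup.centralizer {shat^2} := htop ▸ Subgroup.mem_top x
  exact Subgroup.mem_centralizer_iff.1 hx _ rfl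

lemma shat4_central : shat ^ 4 ∈ Subgroup.center Mp := by
  rw [Subgroup.mem_center_iff]
  intro g
  have h4 : shat^4 = shat^2 * shat^2 := by group
  rw [h4]
  calc g * (shat^2 * shat^2) = (shat^2 * g) * shat^2 := by
        rw [← mul_assoc, ← c_central g]
    _ = shat^2 * shat^2 * g := by rw [mul_assoc, ← c_central g, ← mul_assoc]

def f24 : Bool → Multiplicative (ZMod 24) := fun b =>
  Multiplicative.ofAdd (if b then 3 else 2)

lemma relmap24 : ∀ r ∈ mpRels, FreeGroup.lift f24 r = 1 := by
  intro r hr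
  rcases hr with rfl | rfl
  · rw [map_pow, FreeGroup.lift_apply_of]
    show (Multiplicative.ofAdd ((3:ZMod 24)))^8 = 1
    decide
  · rw [map_mul, map_pow, map_inv, map_pow, FreeGroup.lift_apply_of, FreeGroup.lift_apply_of]
    show (Multiplicative.ofAdd ((3:ZMod 24)))^2 * ((Multiplicative.ofAdd ((2:ZMod 24)))^3)⁻¹ = 1
    decide

lemma shat4_ne_one : shat ^ 4 ≠ 1 := by
  intro h
  have h2 := congrArg (PresentedGroup.toGroup relmap24) h
  rw [map_pow, map_one] at h2
  have h3 : (PresentedGroup.toGroup relmap24) shat = f24 true :=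
    PresentedGroup.toGroup.of relmap24
  rw [h3] at h2
  revert h2
  show (Multiplicative.ofAdd ((3:ZMod 24)))^4 = 1 → False
  decide

lemma shat4_sq : shat^4 * shat^4 = 1 := by
  rw [← pow_add]; exact rel_s8

lemma hom_ext {G : Type*} [Group G] (f g : Mp →* G)
    (hu : f uhat = g uhat) (hs : f shat = g shat) : f = g := by
  ext x
  cases x
  · exact hu
  · exact hs

/-! ### Normal forms in `Mp` -/

def c : Mp := shat ^ 2

lemma ck_comm (k : ℤ) (x : Mp) : x * c ^ k = c ^ k * x := by
  have h : Commute x c := (c_central x).symm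
  exact (h.zpow_right k).eq

lemma s_sq : shat * shat = c := (pow_two shat).symm

lemma u_cube : uhat * (uhat * uhat) = c := by
  rw [c, rel_s2u3, pow_succ, pow_two, ← mul_assoc]

lemma s_inv : shat⁻¹ = c⁻¹ * shat := by rw [c]; group

lemma u_inv : uhat⁻¹ = c⁻¹ * (uhat * uhat) := by
  rw [c, rel_s2u3]; group

def sb : Bool → Mp
  | true => shat
  | false => 1

def Wl : List ℕ → Mp
  | [] => 1
  | e :: l => uhat ^ e * shat * Wl l

def Good (g : Mp) : Prop :=
  ∃ (k : ℤ) (a b : Bool) (l : List ℕ),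
    (∀ e ∈ l, e = 1 ∨ e = 2) ∧ g = c ^ k * sb a * Wl l * (sb b)⁻¹

lemma good_one : Good 1 :=
  ⟨0, false, false, [], by simp, by simp [sb, Wl]⟩

lemma good_c_mul {h : Mp} (j : ℤ) (hh : Good h) : Good (c ^ j * h) := by
  obtain ⟨k, a, b, l, hl, rfl⟩ := hh
  exact ⟨j + k, a, b, l, hl, by rw [zpow_add]; group⟩

lemma good_s_mul {h : Mp} (hh : Good h) : Good (shat * h) := by
  obtain ⟨k, a, b, l, hl, rfl⟩ := hh
  cases a
  · refine ⟨k, true, b, l, hl, ?_⟩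
    show shat * (c ^ k * 1 * Wl l * (sb b)⁻¹) = c ^ k * shat * Wl l * (sb b)⁻¹
    rw [mul_one, ← mul_assoc, ← mul_assoc, ck_comm]
  · refine ⟨k + 1, false, b, l, hl, ?_⟩
    show shat * (c ^ k * shat * Wl l * (sb b)⁻¹) = c ^ (k+1) * 1 * Wl l * (sb b)⁻¹
    rw [mul_one, zpow_add_one, ← mul_assoc, ← mul_assoc, ← mul_assoc, ck_comm,
      mul_assoc (c^k) shat shat, s_sq]

lemma good_u_mul {h : Mp} (hh : Good h) : Good (uhat * h) := by
  obtain ⟨k, a, b, l, hl, rfl⟩ := hh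
  cases a
  · -- a = false
    match l, hl with
    | [], _ =>
      cases b
      · refine ⟨k, false, true, [1], by simp, ?_⟩
        show uhat * (c ^ k * 1 * 1 * (1:Mp)⁻¹) = c ^ k * 1 * (uhat ^ 1 * shat * 1) * shat⁻¹
        simp only [mul_one, one_mul, inv_one, pow_one]
        rw [mul_assoc, mul_inv_cancel_right, ck_comm]
      · refine ⟨k - 1, false, false, [1], by simp, ?_⟩
        show uhat * (c ^ k * 1 * 1 * shat⁻¹) = c ^ (k-1) * 1 * (uhat ^ 1 * shat * 1) * (1:Mp)⁻¹
        simp only [mul_one, one_mul, inv_one, pow_one]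
        rw [s_inv, ← mul_assoc (c^k) c⁻¹ shat, ← zpow_sub_one, ← mul_assoc, ck_comm, mul_assoc]
    | e :: l', hl' =>
      rcases hl' e (List.mem_cons_self) with rfl | rfl
      · refine ⟨k, false, b, 2 :: l', ?_, ?_⟩
        · intro e he
          rcases List.mem_cons.1 he with rfl | he
          · exact Or.inr rfl
          · exact hl' e (List.mem_cons_of_mem _ he)
        · show uhat * (c ^ k * 1 * (uhat ^ 1 * shat * Wl l') * (sb b)⁻¹)
            = c ^ k * 1 * (uhat ^ 2 * shat * Wl l') * (sb b)⁻¹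
          simp only [mul_one, one_mul, pow_one, pow_two]
          rw [← mul_assoc, ← mul_assoc, ← mul_assoc, ← mul_assoc, ck_comm,
            mul_assoc (c^k) uhat uhat]
          conv_rhs => rw [← mul_assoc, ← mul_assoc]
      · refine ⟨k + 1, true, b, l', fun e he => hl' e (List.mem_cons_of_mem _ he), ?_⟩
        show uhat * (c ^ k * 1 * (uhat ^ 2 * shat * Wl l') * (sb b)⁻¹)
          = c ^ (k+1) * shat * Wl l' * (sb b)⁻¹
        simp only [mul_one, one_mul, pow_two]
        rw [zpow_add_one, ← mul_assoc, ← mul_assoc, ← mul_assoc, ← mul_assoc, ck_comm,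
          mul_assoc (c^k) uhat (uhat * uhat), u_cube]
  · -- a = true
    refine ⟨k, false, b, 1 :: l, ?_, ?_⟩
    · intro e he
      rcases List.mem_cons.1 he with rfl | he
      · exact Or.inl rfl
      · exact hl e he
    · show uhat * (c ^ k * shat * Wl l * (sb b)⁻¹)
        = c ^ k * 1 * (uhat ^ 1 * shat * Wl l) * (sb b)⁻¹
      simp only [mul_one, pow_one]
      rw [← mul_assoc, ← mul_assoc, ← mul_assoc, ck_comm, mul_assoc (c^k) uhat shat,
        ← mul_assoc (c^k) (uhat * shat) (Wl l)]

lemma good_sinv_mul {h : Mp} (hh : Good h) : Good (shat⁻¹ * h) := by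
  have h2 := good_c_mul (-1) (good_s_mul hh)
  rw [zpow_neg_one] at h2
  rw [s_inv, mul_assoc]
  exact h2

lemma good_uinv_mul {h : Mp} (hh : Good h) : Good (uhat⁻¹ * h) := by
  have h2 := good_c_mul (-1) (good_u_mul (good_u_mul hh))
  rw [zpow_neg_one] at h2
  rw [u_inv, mul_assoc, mul_assoc]
  exact h2

lemma good_all : ∀ g : Mp, Good g := by
  intro g
  have hg : g ∈ Subgroup.closure (Set.range (PresentedGroup.of : Bool → Mp)) := by
    rw [PresentedGroup.closure_range_of]; trivial
  have key : (∀ h, Good h → Good (g * h)) ∧ (∀ h, Good h → Good (g⁻¹ * h)) := by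
    induction hg using Subgroup.closure_induction with
    | mem y hy =>
      obtain ⟨b, rfl⟩ := hy
      cases b
      · exact ⟨fun h hh => good_u_mul hh, fun h hh => good_uinv_mul hh⟩
      · exact ⟨fun h hh => good_s_mul hh, fun h hh => good_sinv_mul hh⟩
    | one => exact ⟨fun h hh => by rwa [one_mul], fun h hh => by rwa [inv_one, one_mul]⟩
    | mul x y _ _ hx hy =>
      exact ⟨fun h hh => by rw [mul_assoc]; exact hx.1 _ (hy.1 _ hh),
        fun h hh => by rw [mul_inv_rev, mul_assoc]; exact hy.2 _ (hx.2 _ hh)⟩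
    | inv x _ hx => exact ⟨hx.2, fun h hh => by rw [inv_inv]; exact hx.1 _ hh⟩
  have := key.1 1 good_one
  rwa [mul_one] at this

/-! ### The positivity invariant -/

def Am : ℕ → Matrix (Fin 2) (Fin 2) ℤ
  | 1 => !![1, 0; -1, 1]
  | 2 => !![1, -1; 0, 1]
  | _ => 1

def Inv' (m : Matrix (Fin 2) (Fin 2) ℤ) : Prop :=
  1 ≤ m 0 0 ∧ 1 ≤ m 1 1 ∧ m 0 1 ≤ 0 ∧ m 1 0 ≤ 0 ∧ m 0 1 + m 1 0 ≤ -1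

lemma inv_Am {e : ℕ} (he : e = 1 ∨ e = 2) : Inv' (Am e) := by
  rcases he with rfl | rfl <;>
    refine ⟨?_, ?_, ?_, ?_, ?_⟩ <;> norm_num [Am]

lemma inv_step {e : ℕ} (he : e = 1 ∨ e = 2) {m : Matrix (Fin 2) (Fin 2) ℤ}
    (hm : Inv' m) : Inv' (Am e * m) := by
  obtain ⟨h1, h2, h3, h4, h5⟩ := hm
  rcases he with rfl | rfl <;>
    refine ⟨?_, ?_, ?_, ?_, ?_⟩ <;>
      simp [Am, Matrix.mul_apply, Fin.sum_univ_two] <;> linarith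

lemma inv_ne {m : Matrix (Fin 2) (Fin 2) ℤ} (hm : Inv' m) :
    m ≠ 1 ∧ m ≠ -1 ∧ m ≠ (S : Matrix (Fin 2) (Fin 2) ℤ)
      ∧ m ≠ -(S : Matrix (Fin 2) (Fin 2) ℤ) := by
  obtain ⟨h1, h2, h3, h4, h5⟩ := hm
  refine ⟨?_, ?_, ?_, ?_⟩ <;> intro h <;> rw [h] at h5 h1
  · simp [Matrix.one_apply] at h5
  · simp [Matrix.one_apply] at h5
  · simp [show (S : Matrix (Fin 2) (Fin 2) ℤ) 0 0 = 0 from rfl] at h1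
  · simp [show (S : Matrix (Fin 2) (Fin 2) ℤ) 0 0 = 0 from rfl] at h1

def ML : List ℕ → SL2Z
  | [] => 1
  | e :: l => U ^ e * S * ML l

lemma coe_UeS {e : ℕ} (he : e = 1 ∨ e = 2) :
    ((U ^ e * S : SL2Z) : Matrix (Fin 2) (Fin 2) ℤ) = -(Am e) := by
  rcases he with rfl | rfl <;>
  · apply Matrix.ext
    intro i j
    rw [Matrix.SpecialLinearGroup.coe_mul, Matrix.SpecialLinearGroup.coe_pow]
    fin_cases i <;> fin_cases j <;>
      simp [U, S, Am, pow_succ, Matrix.SpecialLinearGroup.coe_mul, Matrix.mul_apply,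
        Fin.sum_univ_two]

lemma ML_sgn : ∀ l : List ℕ, (∀ e ∈ l, e = 1 ∨ e = 2) → l ≠ [] →
    ∃ m : Matrix (Fin 2) (Fin 2) ℤ, Inv' m ∧
      (((ML l : SL2Z) : Matrix (Fin 2) (Fin 2) ℤ) = m ∨
       ((ML l : SL2Z) : Matrix (Fin 2) (Fin 2) ℤ) = -m) := by
  intro l
  induction l with
  | nil => intro _ h; exact absurd rfl h
  | cons e l IH =>
    intro hval _
    have he : e = 1 ∨ e = 2 := hval e (List.mem_cons_self)
    have hl : ∀ e' ∈ l, e' = 1 ∨ e' = 2 := fun e' h' => hval e' (List.mem_cons_of_mem _ h')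
    obtain _ | ⟨e', l'⟩ := l
    · refine ⟨Am e, inv_Am he, Or.inr ?_⟩
      show ((U ^ e * S * ML [] : SL2Z) : Matrix (Fin 2) (Fin 2) ℤ) = -(Am e)
      rw [show ML [] = 1 from rfl, mul_one, coe_UeS he]
    · obtain ⟨m, hm, hsgn⟩ := IH hl (List.cons_ne_nil e' l')
      refine ⟨Am e * m, inv_step he hm, ?_⟩
      have hcoe : ((ML (e :: e' :: l') : SL2Z) : Matrix (Fin 2) (Fin 2) ℤ)
          = -(Am e) * ((ML (e' :: l') : SL2Z) : Matrix (Fin 2) (Fin 2) ℤ) := by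
        rw [show ML (e :: e' :: l') = U ^ e * S * ML (e' :: l') from rfl,
          Matrix.SpecialLinearGroup.coe_mul, coe_UeS he]
      rcases hsgn with h | h
      · right
        rw [hcoe, h, neg_mul]
      · left
        rw [hcoe, h, neg_mul_neg]

lemma ML_ne (l : List ℕ) (hval : ∀ e ∈ l, e = 1 ∨ e = 2) (hne : l ≠ []) (t : SL2Z)
    (ht : ((t : SL2Z) : Matrix (Fin 2) (Fin 2) ℤ) = 1
      ∨ ((t : SL2Z) : Matrix (Fin 2) (Fin 2) ℤ) = -1
      ∨ ((t : SL2Z) : Matrix (Fin 2) (Fin 2) ℤ) = (S : Matrix (Fin 2) (Fin 2) ℤ)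
      ∨ ((t : SL2Z) : Matrix (Fin 2) (Fin 2) ℤ) = -(S : Matrix (Fin 2) (Fin 2) ℤ)) :
    ML l ≠ t := by
  obtain ⟨m, hm, hsgn⟩ := ML_sgn l hval hne
  obtain ⟨n1, n2, n3, n4⟩ := inv_ne hm
  intro heq
  have hq : ((ML l : SL2Z) : Matrix (Fin 2) (Fin 2) ℤ)
      = ((t : SL2Z) : Matrix (Fin 2) (Fin 2) ℤ) := congrArg _ heq
  rcases hsgn with h | h
  · have hmt : m = ((t : SL2Z) : Matrix (Fin 2) (Fin 2) ℤ) := h.symm.trans hq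
    rcases ht with h' | h' | h' | h'
    · exact n1 (hmt.trans h')
    · exact n2 (hmt.trans h')
    · exact n3 (hmt.trans h')
    · exact n4 (hmt.trans h')
  · have hmt : m = -((t : SL2Z) : Matrix (Fin 2) (Fin 2) ℤ) :=
      neg_eq_iff_eq_neg.1 (h.symm.trans hq)
    rcases ht with h' | h' | h' | h'
    · exact n2 (by rw [hmt, h'])
    · exact n1 (by rw [hmt, h', neg_neg])
    · exact n4 (by rw [hmt, h'])
    · exact n3 (by rw [hmt, h', neg_neg])

/-! ### Images under `π` -/

def Ps : Bool → SL2Z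
  | true => S
  | false => 1

lemma pi0_sb (a : Bool) : pi0 (sb a) = Ps a := by
  cases a
  · exact map_one pi0
  · exact pi0_s

lemma pi0_c : pi0 c = S^2 := by
  rw [c, map_pow, pi0_s]

lemma pi0_Wl : ∀ l : List ℕ, pi0 (Wl l) = ML l := by
  intro l
  induction l with
  | nil => exact map_one pi0
  | cons e l IH =>
    show pi0 (uhat ^ e * shat * Wl l) = U ^ e * S * ML l
    rw [map_mul, map_mul, map_pow, pi0_u, pi0_s, IH]

/-! ### Generation of `SL(2,ℤ)` -/

def T : SL2Z := ⟨!![1,1;0,1], by norm_num [Matrix.det_fin_two_of]⟩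

lemma T_eq_modular : T = ModularGroup.T := rfl

lemma coe_T_zpow (n : ℤ) : ((T^n : SL2Z) : Matrix (Fin 2) (Fin 2) ℤ) = !![1, n; 0, 1] := by
  rw [T_eq_modular]; exact ModularGroup.coe_T_zpow n

lemma gen (g : SL2Z) : g ∈ Subgroup.closure ({S, U} : Set SL2Z) := by
  set H := Subgroup.closure ({S, U} : Set SL2Z) with hH
  have hS : S ∈ H := Subgroup.subset_closure (Set.mem_insert _ _)
  have hU : U ∈ H := Subgroup.subset_closure (Set.mem_insert_of_mem _ rfl)
  have hT : T ∈ H := by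
    have hSTU : S * T = U := by
      apply Subtype.ext
      rw [Matrix.SpecialLinearGroup.coe_mul]
      ext i j
      fin_cases i <;> fin_cases j <;>
        simp [S, T, U, Matrix.SpecialLinearGroup.coe_mul, Matrix.mul_apply, Fin.sum_univ_two]
    have : T = S⁻¹ * U := by rw [← hSTU, inv_mul_cancel_left]
    rw [this]
    exact mul_mem (inv_mem hS) hU
  have hTz : ∀ n : ℤ, T^n ∈ H := fun n => zpow_mem hT n
  suffices key : ∀ n : ℕ, ∀ g : SL2Z, (g.1 1 0).natAbs = n → g ∈ H by
    exact key _ g rfl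
  intro n
  induction n using Nat.strong_induction_on with
  | _ n IH =>
    intro g hgn
    have hdet : g.1 0 0 * g.1 1 1 - g.1 0 1 * g.1 1 0 = 1 := by
      have := g.2
      rwa [Matrix.det_fin_two] at this
    rcases eq_or_ne (g.1 1 0) 0 with hc | hc
    · rw [hc, mul_zero, sub_zero] at hdet
      rcases Int.mul_eq_one_iff_eq_one_or_neg_one.1 hdet with ⟨ha, hd⟩ | ⟨ha, hd⟩
      · have hgT : g = T ^ (g.1 0 1) := by
          apply Subtype.ext
          rw [coe_T_zpow]
          ext i j
          fin_cases i <;> fin_cases j <;> simp [ha, hc, hd]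
        rw [hgT]; exact hTz _
      · have hgT : g = S^2 * T ^ (-(g.1 0 1)) := by
          apply Subtype.ext
          rw [Matrix.SpecialLinearGroup.coe_mul, coe_S2, coe_T_zpow, neg_one_mul]
          ext i j
          fin_cases i <;> fin_cases j <;> simp [ha, hc, hd]
        rw [hgT]
        exact mul_mem (pow_mem hS 2) (hTz _)
    · have h10 : (S * (T ^ (-(g.1 0 0 / g.1 1 0)) * g)).1 1 0 = g.1 0 0 % g.1 1 0 := by
        rw [Matrix.SpecialLinearGroup.coe_mul, Matrix.SpecialLinearGroup.coe_mul, coe_T_zpow]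
        simp [S, Matrix.mul_apply, Matrix.vecMul, dotProduct, Matrix.vecHead, Fin.sum_univ_succ,
          Matrix.vecTail, Fin.sum_univ_two]
        rw [Int.emod_def]
        ring
      have hbound : ((g.1 0 0 % g.1 1 0).natAbs) < n := by
        have h1 := Int.emod_nonneg (g.1 0 0) hc
        have h2 := Int.emod_lt (g.1 0 0) hc
        omega
      have hg' : (S * (T ^ (-(g.1 0 0 / g.1 1 0)) * g)) ∈ H := by
        apply IH _ hbound
        rw [h10]
      have : g = T ^ (g.1 0 0 / g.1 1 0) * S⁻¹ * (S * (T ^ (-(g.1 0 0 / g.1 1 0)) * g)) := by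
        rw [mul_assoc, inv_mul_cancel_left, ← mul_assoc, ← zpow_add, add_neg_cancel,
          zpow_zero, one_mul]
      rw [this]
      exact mul_mem (mul_mem (hTz _) (inv_mem hS)) hg'

lemma pi0_surj : Function.Surjective pi0 := by
  intro g
  have hle : Subgroup.closure ({S, U} : Set SL2Z) ≤ pi0.range := by
    rw [Subgroup.closure_le]
    rintro x (rfl | rfl)
    · exact ⟨shat, pi0_s⟩
    · exact ⟨uhat, pi0_u⟩
  obtain ⟨y, hy⟩ := hle (gen g)
  exact ⟨y, hy⟩

/-! ### The kernel -/

lemma ker_sub : ∀ x : Mp, pi0 x = 1 → x = 1 ∨ x = shat ^ 4 := by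
  intro x hx
  obtain ⟨k, a, b, l, hl, rfl⟩ := good_all x
  rw [map_mul, map_mul, map_mul, map_inv, map_zpow, pi0_c, pi0_sb, pi0_sb, pi0_Wl] at hx
  obtain _ | ⟨e, l'⟩ := l
  · -- empty word: x = c^k * sb a * (sb b)⁻¹
    rw [show ML [] = 1 from rfl, mul_one] at hx
    cases a <;> cases b
    · -- a = false, b = false
      rw [show Ps false = 1 from rfl, mul_one, inv_one, mul_one] at hx
      rcases Int.even_or_odd k with ⟨q, rfl⟩ | ⟨q, rfl⟩
      · have hx2 : c ^ (q + q) = (shat^4)^q := by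
          have h24 : c^(2:ℤ) = shat^4 := by
            rw [zpow_two]
            show shat^2 * shat^2 = shat^4
            rw [← pow_add]
          rw [← two_mul, zpow_mul, h24]
        have hform : c ^ (q+q) * sb false * Wl [] * (sb false)⁻¹ = (shat^4)^q := by
          simp only [show sb false = 1 from rfl, show Wl [] = 1 from rfl, mul_one, inv_one]
          rw [hx2]
        rw [hform]
        rcases ord2 (shat^4) shat4_sq q with h | h
        · exact Or.inl h
        · exact Or.inr h
      · exfalso
        rw [S2_zpow_odd] at hx
        exact S2_ne_one hx
    · -- a = false, b = true
      exfalso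
      rw [show Ps false = 1 from rfl, mul_one, show Ps true = S from rfl, mul_inv_eq_one] at hx
      rcases ord2 (S^2) S2_sq k with h | h
      · rw [h] at hx; exact S_ne_one hx.symm
      · rw [h] at hx; exact S_ne_S2 hx.symm
    · -- a = true, b = false
      exfalso
      rw [show Ps true = S from rfl, show Ps false = 1 from rfl, inv_one, mul_one] at hx
      rcases ord2 (S^2) S2_sq k with h | h
      · rw [h, one_mul] at hx; exact S_ne_one hx
      · rw [h] at hx; exact S2S_ne_one hx
    · -- a = true, b = true
      rw [show Ps true = S from rfl, mul_inv_cancel_right] at hx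
      rcases Int.even_or_odd k with ⟨q, rfl⟩ | ⟨q, rfl⟩
      · have hx2 : c ^ (q + q) = (shat^4)^q := by
          have h24 : c^(2:ℤ) = shat^4 := by
            rw [zpow_two]
            show shat^2 * shat^2 = shat^4
            rw [← pow_add]
          rw [← two_mul, zpow_mul, h24]
        have hform : c ^ (q+q) * sb true * Wl [] * (sb true)⁻¹ = (shat^4)^q := by
          simp only [show Wl [] = 1 from rfl, mul_one, mul_inv_cancel_right]
          rw [hx2]
        rw [hform]
        rcases ord2 (shat^4) shat4_sq q with h | h
        · exact Or.inl h
        · exact Or.inr h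
      · exfalso
        rw [S2_zpow_odd] at hx
        exact S2_ne_one hx
  · -- nonempty word: contradiction
    exfalso
    have hne : (e :: l' : List ℕ) ≠ [] := List.cons_ne_nil e l'
    have hgr : ML (e :: l') = (Ps a)⁻¹ * ((S^2)^k)⁻¹
        * ((S^2)^k * Ps a * ML (e :: l') * (Ps b)⁻¹) * Ps b := by group
    rw [hx, mul_one] at hgr
    rcases ord2 (S^2) S2_sq k with h | h <;> rw [h] at hgr <;> cases a <;> cases b <;>
      exact ML_ne (e :: l') hl hne _ (by
        simp only [show Ps true = S from rfl, show Ps false = 1 from rfl, inv_one, one_mul,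
          mul_one, S2_inv, Matrix.SpecialLinearGroup.coe_mul, coe_S2, coe_Sinv,
          Matrix.SpecialLinearGroup.coe_one, neg_one_mul, neg_mul, mul_neg, neg_neg, coe_SS]
        tauto) hgr

end MpAux

open MpAux in
/-- There is a unique homomorphism `π : Mp(2,ℤ) → SL(2,ℤ)` with `π(û) = U` and
`π(ŝ) = S`; it is surjective and its kernel is the two-element central subgroup
`{1, ŝ⁴}`, so `Mp(2,ℤ)` is a central extension of `SL(2,ℤ)` by `ℤ/2ℤ`. -/
theorem mp2z_covers_sl2z :
    ∃ π : Mp →* Matrix.SpecialLinearGroup (Fin 2) ℤ,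
      π uhat = U ∧ π shat = S ∧
      (∀ π' : Mp →* Matrix.SpecialLinearGroup (Fin 2) ℤ,
        π' uhat = U → π' shat = S → π' = π) ∧
      Function.Surjective π ∧
      (π.ker : Set Mp) = {1, shat ^ 4} ∧
      shat ^ 4 ≠ 1 ∧
      shat ^ 4 ∈ Subgroup.center Mp := by
  refine ⟨pi0, pi0_u, pi0_s, ?_, pi0_surj, ?_, shat4_ne_one, shat4_central⟩
  · intro π' hu hs
    exact hom_ext π' pi0 (by rw [hu, pi0_u]) (by rw [hs, pi0_s])
  · ext x
    simp only [SetLike.mem_coe, MonoidHom.mem_ker, Set.mem_insert_iff, Set.mem_singleton_iff]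
    constructor
    · exact ker_sub x
    · rintro (rfl | rfl)
      · exact map_one pi0
      · rw [map_pow, pi0_s]
        exact S4
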